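/- arXiv:2409.16101 — 5 statements merged into one kernel-verified Lean document; each statement's English description precedes it below -/
import Mathlib

section
/- Let J : ℝ → ℝ be continuous, bounded, nonnegative, even, with J(0) > 0 and ∫_ℝ J = 1. Suppose there exist ς₁, ς₂ > 0 and M > 0 such that ς₁|x|^{−γ} ≤ J(x) ≤ ς₂|x|^{−γ} for |x| ≥ M, with γ ∈ (1, 2). Then there exist constants c₁, c₂ > 0 and h₀ > 0 such that for all h ≥ h₀, c₁ h^{2−γ} ≤ ∫₀^h ∫_h^∞ J(x − y) dy dx ≤ c₂ h^{2−γ}. -/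
open Set MeasureTheory

theorem double_integral_algebraic_decay_estimate
    (J : ℝ → ℝ) (γ ς₁ ς₂ M : ℝ)
    (hJc : Continuous J) (hJbdd : ∃ C, ∀ x, J x ≤ C)
    (hJpos : ∀ x, 0 ≤ J x) (hJeven : ∀ x, J (-x) = J x)
    (hJ0 : 0 < J 0) (hJint : ∫ x, J x = 1)
    (hγ : 1 < γ) (hγ2 : γ < 2) (hς₁ : 0 < ς₁) (hς₂ : 0 < ς₂) (hM : 0 < M)
    (hdecay : ∀ x : ℝ, M ≤ |x| → ς₁ * |x| ^ (-γ) ≤ J x ∧ J x ≤ ς₂ * |x| ^ (-γ)) :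
    ∃ c₁ > 0, ∃ c₂ > 0, ∃ h₀ > 0, ∀ h ≥ h₀,
      c₁ * h ^ (2 - γ) ≤ (∫ x in Ioc (0:ℝ) h, ∫ y in Ioi h, J (x - y)) ∧
      (∫ x in Ioc (0:ℝ) h, ∫ y in Ioi h, J (x - y)) ≤ c₂ * h ^ (2 - γ) := by
  have hγ1 : (0:ℝ) < γ - 1 := by linarith
  have h2γ : (0:ℝ) < 2 - γ := by linarith
  -- J is integrable
  have hJInt : Integrable J := by
    by_contra hnot
    rw [integral_undef hnot] at hJint
    norm_num at hJint
  -- the tail function F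
  set F : ℝ → ℝ := fun s => ∫ t in Ioi s, J t with hFdef
  have hFanti : Antitone F := by
    intro a b hab
    exact setIntegral_mono_set hJInt.integrableOn
      (Filter.Eventually.of_forall fun t => hJpos t) (Ioi_subset_Ioi hab).eventuallyLE
  have hFnonneg : ∀ s, 0 ≤ F s := fun s =>
    setIntegral_nonneg measurableSet_Ioi fun t _ => hJpos t
  have hFle1 : ∀ s, F s ≤ 1 := by
    intro s
    rw [← hJint]
    exact setIntegral_le_integral hJInt (Filter.Eventually.of_forall hJpos)
  -- inner integral computation
  have hinner : ∀ (h x : ℝ), (∫ y in Ioi h, J (x - y)) = F (h - x) := by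
    intro h x
    have h1 : ∀ y : ℝ, J (x - y) = J (y - x) := by
      intro y
      rw [show x - y = -(y - x) by ring, hJeven]
    calc (∫ y in Ioi h, J (x - y)) = ∫ y in Ioi h, J (y - x) := by simp_rw [h1]
      _ = ∫ y, (Ioi (h - x)).indicator J (y - x) := by
          rw [← integral_indicator measurableSet_Ioi]
          congr 1
          ext y
          by_cases hy : y ∈ Ioi h
          · rw [indicator_of_mem hy, indicator_of_mem (by simpa [sub_lt_sub_iff_right] using hy)]
          · rw [indicator_of_notMem hy, indicator_of_notMem (by
              simp only [mem_Ioi, sub_lt_sub_iff_right]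
              simpa [mem_Ioi] using hy)]
      _ = ∫ y, (Ioi (h - x)).indicator J y := integral_sub_right_eq_self _ x
      _ = F (h - x) := integral_indicator measurableSet_Ioi
  -- reduce the double integral to ∫ F on (0, h)
  have houter : ∀ h : ℝ, 0 ≤ h →
      (∫ x in Ioc (0:ℝ) h, ∫ y in Ioi h, J (x - y)) = ∫ s in (0:ℝ)..h, F s := by
    intro h hh
    rw [← intervalIntegral.integral_of_le hh]
    calc (∫ x in (0:ℝ)..h, ∫ y in Ioi h, J (x - y))
        = ∫ x in (0:ℝ)..h, F (h - x) := by simp_rw [hinner]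
      _ = ∫ x in (h - h)..(h - 0), F x := intervalIntegral.integral_comp_sub_left _ h
      _ = ∫ s in (0:ℝ)..h, F s := by norm_num
  -- rpow tail integrability
  have hrpow_int : ∀ s : ℝ, 0 < s → IntegrableOn (fun t : ℝ => t ^ (-γ)) (Ioi s) :=
    fun s hs => integrableOn_Ioi_rpow_of_lt (by linarith) hs
  have hkey : ∀ s : ℝ, 0 < s → -s ^ (-γ + 1) / (-γ + 1) = s ^ (1 - γ) / (γ - 1) := by
    intro s hs
    rw [div_eq_div_iff (by linarith) (by linarith), show -γ + 1 = 1 - γ by ring]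
    ring
  -- bounds on F for s ≥ M
  have hFub : ∀ s, M ≤ s → F s ≤ ς₂ / (γ - 1) * s ^ (1 - γ) := by
    intro s hs
    have hs0 : 0 < s := lt_of_lt_of_le hM hs
    have h1 : F s ≤ ∫ t in Ioi s, ς₂ * t ^ (-γ) := by
      apply setIntegral_mono_on hJInt.integrableOn ((hrpow_int s hs0).const_mul ς₂)
        measurableSet_Ioi
      intro t ht
      have ht0 : 0 < t := hs0.trans ht
      have htM : M ≤ |t| := by rw [abs_of_pos ht0]; exact hs.trans ht.le
      have := (hdecay t htM).2
      rwa [abs_of_pos ht0] at this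
    refine h1.trans ?_
    rw [integral_const_mul, integral_Ioi_rpow_of_lt (by linarith) hs0, hkey s hs0]
    rw [div_mul_eq_mul_div, mul_div_assoc]
  have hFlb : ∀ s, M ≤ s → ς₁ / (γ - 1) * s ^ (1 - γ) ≤ F s := by
    intro s hs
    have hs0 : 0 < s := lt_of_lt_of_le hM hs
    have h1 : (∫ t in Ioi s, ς₁ * t ^ (-γ)) ≤ F s := by
      apply setIntegral_mono_on ((hrpow_int s hs0).const_mul ς₁) hJInt.integrableOn
        measurableSet_Ioi
      intro t ht
      have ht0 : 0 < t := hs0.trans ht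
      have htM : M ≤ |t| := by rw [abs_of_pos ht0]; exact hs.trans ht.le
      have := (hdecay t htM).1
      rwa [abs_of_pos ht0] at this
    refine le_trans ?_ h1
    rw [integral_const_mul, integral_Ioi_rpow_of_lt (by linarith) hs0, hkey s hs0]
    rw [div_mul_eq_mul_div, mul_div_assoc]
  -- choice of constants
  set K₁ : ℝ := ς₁ / (γ - 1) / (2 - γ) with hK₁def
  set K₂ : ℝ := ς₂ / (γ - 1) / (2 - γ) with hK₂def
  have hK₁pos : 0 < K₁ := div_pos (div_pos hς₁ hγ1) h2γ
  have hK₂pos : 0 < K₂ := div_pos (div_pos hς₂ hγ1) h2γ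
  set A : ℝ := (2 : ℝ) ^ (1 / (2 - γ)) * M with hAdef
  have hApos : 0 < A := mul_pos (Real.rpow_pos_of_pos two_pos _) hM
  set h₀ : ℝ := max (max 1 M) A with hh₀def
  have hh₀pos : (0:ℝ) < h₀ := lt_of_lt_of_le one_pos ((le_max_left 1 M).trans (le_max_left _ _))
  refine ⟨K₁ / 2, by positivity, M + K₂, by positivity, h₀, hh₀pos, ?_⟩
  intro h hh
  have hh1 : (1:ℝ) ≤ h := ((le_max_left 1 M).trans (le_max_left _ _)).trans hh
  have hhM : M ≤ h := ((le_max_right 1 M).trans (le_max_left _ _)).trans hh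
  have hhA : A ≤ h := (le_max_right _ _).trans hh
  have hhpos : 0 < h := lt_of_lt_of_le one_pos hh1
  rw [houter h hhpos.le]
  -- split the integral
  have hF0M : IntervalIntegrable F volume 0 M := hFanti.intervalIntegrable
  have hFMh : IntervalIntegrable F volume M h := hFanti.intervalIntegrable
  have hsplit : (∫ s in (0:ℝ)..h, F s) = (∫ s in (0:ℝ)..M, F s) + ∫ s in M..h, F s :=
    (intervalIntegral.integral_add_adjacent_intervals hF0M hFMh).symm
  have hrpow_ii : IntervalIntegrable (fun s : ℝ => s ^ (1 - γ)) volume M h := by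
    apply intervalIntegral.intervalIntegrable_rpow (Or.inr ?_)
    rw [uIcc_of_le hhM]
    intro hmem
    exact absurd hmem.1 (by linarith)
  have hrpow_val : (∫ s in M..h, s ^ (1 - γ)) = (h ^ (2 - γ) - M ^ (2 - γ)) / (2 - γ) := by
    rw [integral_rpow (Or.inl (by linarith)), show 1 - γ + 1 = 2 - γ by ring]
  -- h^(2-γ) dominates constants and M^(2-γ)
  have hhr1 : (1:ℝ) ≤ h ^ (2 - γ) := Real.one_le_rpow hh1 h2γ.le
  have hM2 : M ^ (2 - γ) ≤ h ^ (2 - γ) / 2 := by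
    have hA2 : A ^ (2 - γ) = 2 * M ^ (2 - γ) := by
      rw [hAdef, Real.mul_rpow (Real.rpow_nonneg two_pos.le _) hM.le,
        ← Real.rpow_mul two_pos.le, one_div, inv_mul_cancel₀ h2γ.ne', Real.rpow_one]
    have : A ^ (2 - γ) ≤ h ^ (2 - γ) := Real.rpow_le_rpow hApos.le hhA h2γ.le
    rw [hA2] at this
    linarith
  constructor
  · -- lower bound
    have hlow1 : (0:ℝ) ≤ ∫ s in (0:ℝ)..M, F s :=
      intervalIntegral.integral_nonneg hM.le fun s _ => hFnonneg s
    have hlow2 : (∫ s in M..h, ς₁ / (γ - 1) * s ^ (1 - γ)) ≤ ∫ s in M..h, F s := by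
      apply intervalIntegral.integral_mono_on hhM (hrpow_ii.const_mul _) hFMh
      intro s hs
      exact hFlb s hs.1
    have hval : (∫ s in M..h, ς₁ / (γ - 1) * s ^ (1 - γ))
        = ς₁ / (γ - 1) * ((h ^ (2 - γ) - M ^ (2 - γ)) / (2 - γ)) := by
      rw [intervalIntegral.integral_const_mul, hrpow_val]
    rw [hsplit]
    have hstep : K₁ / 2 * h ^ (2 - γ) ≤ ς₁ / (γ - 1) * ((h ^ (2 - γ) - M ^ (2 - γ)) / (2 - γ)) := by
      calc K₁ / 2 * h ^ (2 - γ) = ς₁ / (γ - 1) * (h ^ (2 - γ) / 2 / (2 - γ)) := by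
            rw [hK₁def]; ring
        _ ≤ ς₁ / (γ - 1) * ((h ^ (2 - γ) - M ^ (2 - γ)) / (2 - γ)) :=
            mul_le_mul_of_nonneg_left ((div_le_div_iff_of_pos_right h2γ).mpr (by linarith))
              (div_pos hς₁ hγ1).le
    linarith [hval ▸ hlow2]
  · -- upper bound
    have hup1 : (∫ s in (0:ℝ)..M, F s) ≤ M := by
      have : (∫ s in (0:ℝ)..M, F s) ≤ ∫ _ in (0:ℝ)..M, (1:ℝ) :=
        intervalIntegral.integral_mono_on hM.le hF0M intervalIntegrable_const
          fun s _ => hFle1 s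
      simpa using this
    have hup2 : (∫ s in M..h, F s) ≤ ∫ s in M..h, ς₂ / (γ - 1) * s ^ (1 - γ) := by
      apply intervalIntegral.integral_mono_on hhM hFMh (hrpow_ii.const_mul _)
      intro s hs
      exact hFub s hs.1
    have hval : (∫ s in M..h, ς₂ / (γ - 1) * s ^ (1 - γ))
        = ς₂ / (γ - 1) * ((h ^ (2 - γ) - M ^ (2 - γ)) / (2 - γ)) := by
      rw [intervalIntegral.integral_const_mul, hrpow_val]
    rw [hsplit]
    have hM2γ : 0 ≤ M ^ (2 - γ) := Real.rpow_nonneg hM.le _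
    have h2 : ς₂ / (γ - 1) * ((h ^ (2 - γ) - M ^ (2 - γ)) / (2 - γ)) ≤ K₂ * h ^ (2 - γ) := by
      calc ς₂ / (γ - 1) * ((h ^ (2 - γ) - M ^ (2 - γ)) / (2 - γ))
          ≤ ς₂ / (γ - 1) * (h ^ (2 - γ) / (2 - γ)) :=
            mul_le_mul_of_nonneg_left ((div_le_div_iff_of_pos_right h2γ).mpr (by linarith))
              (div_pos hς₂ hγ1).le
        _ = K₂ * h ^ (2 - γ) := by rw [hK₂def]; ring
    have hMle : M ≤ M * h ^ (2 - γ) := le_mul_of_one_le_right hM.le hhr1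
    have hfin := hval ▸ hup2
    have hsum : (M + K₂) * h ^ (2 - γ) = M * h ^ (2 - γ) + K₂ * h ^ (2 - γ) := by ring
    linarith
end

section
/- Let J : ℝ → ℝ be continuous, bounded, nonnegative, even, with J(0) > 0 and ∫_ℝ J = 1, and suppose there exist ς₁, ς₂ > 0 and M > 0 such that ς₁|x|^{−2} ≤ J(x) ≤ ς₂|x|^{−2} for |x| ≥ M. Then there exist constants c₁, c₂ > 0 and h₀ > 1 such that for all h ≥ h₀, c₁ ln h ≤ ∫₀^h ∫_h^∞ J(x − y) dy dx ≤ c₂ ln h. -/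
open Set MeasureTheory

theorem double_integral_critical_decay_estimate
    (J : ℝ → ℝ) (ς₁ ς₂ M : ℝ)
    (hJc : Continuous J) (hJbdd : ∃ C, ∀ x, J x ≤ C)
    (hJpos : ∀ x, 0 ≤ J x) (hJeven : ∀ x, J (-x) = J x)
    (hJ0 : 0 < J 0) (hJint : ∫ x, J x = 1)
    (hς₁ : 0 < ς₁) (hς₂ : 0 < ς₂) (hM : 0 < M)
    (hdecay : ∀ x : ℝ, M ≤ |x| → ς₁ * |x| ^ (-2 : ℝ) ≤ J x ∧ J x ≤ ς₂ * |x| ^ (-2 : ℝ)) :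
    ∃ c₁ > 0, ∃ c₂ > 0, ∃ h₀ > 1, ∀ h ≥ h₀,
      c₁ * Real.log h ≤ (∫ x in Ioc (0:ℝ) h, ∫ y in Ioi h, J (x - y)) ∧
      (∫ x in Ioc (0:ℝ) h, ∫ y in Ioi h, J (x - y)) ≤ c₂ * Real.log h := by
  -- J is integrable (otherwise its integral would be 0, not 1)
  have hJintg : Integrable J := by
    by_contra hni
    rw [integral_undef hni] at hJint
    norm_num at hJint
  -- the tail function
  set F : ℝ → ℝ := fun s => ∫ t in Ioi s, J t with hFdef
  have hF0 : ∀ s, 0 ≤ F s := fun s =>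
    setIntegral_nonneg measurableSet_Ioi fun t _ => hJpos t
  have hFanti : Antitone F := by
    intro a b hab
    exact setIntegral_mono_set hJintg.integrableOn
      (Filter.Eventually.of_forall hJpos)
      (HasSubset.Subset.eventuallyLE (Ioi_subset_Ioi hab))
  have hF1 : ∀ s, F s ≤ 1 := by
    intro s
    rw [← hJint]
    exact setIntegral_le_integral hJintg (Filter.Eventually.of_forall hJpos)
  -- the power integrals
  have hrint : ∀ s : ℝ, 0 < s → IntegrableOn (fun t : ℝ => t ^ (-2:ℝ)) (Ioi s) :=
    fun s hs => integrableOn_Ioi_rpow_of_lt (by norm_num) hs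
  have hrval : ∀ s : ℝ, 0 < s → ∫ t in Ioi s, t ^ (-2:ℝ) = s⁻¹ := by
    intro s hs
    rw [integral_Ioi_rpow_of_lt (by norm_num) hs,
      show (-2:ℝ) + 1 = -1 by norm_num, Real.rpow_neg_one]
    field_simp
  have hFupper : ∀ s, M ≤ s → F s ≤ ς₂ / s := by
    intro s hs
    have hs0 : 0 < s := lt_of_lt_of_le hM hs
    have hle : F s ≤ ∫ t in Ioi s, ς₂ * t ^ (-2:ℝ) := by
      apply setIntegral_mono_on hJintg.integrableOn ((hrint s hs0).const_mul ς₂)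
        measurableSet_Ioi
      intro t ht
      have ht' : s < t := ht
      have habs : |t| = t := abs_of_pos (hs0.trans ht')
      have h2 := (hdecay t (by rw [habs]; exact hs.trans ht'.le)).2
      rwa [habs] at h2
    rw [MeasureTheory.integral_const_mul, hrval s hs0] at hle
    rwa [div_eq_mul_inv]
  have hFlower : ∀ s, M ≤ s → ς₁ / s ≤ F s := by
    intro s hs
    have hs0 : 0 < s := lt_of_lt_of_le hM hs
    have hle : (∫ t in Ioi s, ς₁ * t ^ (-2:ℝ)) ≤ F s := by
      apply setIntegral_mono_on ((hrint s hs0).const_mul ς₁) hJintg.integrableOn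
        measurableSet_Ioi
      intro t ht
      have ht' : s < t := ht
      have habs : |t| = t := abs_of_pos (hs0.trans ht')
      have h1 := (hdecay t (by rw [habs]; exact hs.trans ht'.le)).1
      rwa [habs] at h1
    rw [MeasureTheory.integral_const_mul, hrval s hs0] at hle
    rwa [div_eq_mul_inv]
  -- the inner integral is a tail integral
  have hinner : ∀ h x : ℝ, (∫ y in Ioi h, J (x - y)) = F (h - x) := by
    intro h x
    have h1 : ∀ y : ℝ, J (x - y) = J (y - x) := fun y => by
      rw [show x - y = -(y - x) by ring, hJeven]
    simp_rw [h1]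
    calc (∫ y in Ioi h, J (y - x))
        = ∫ y, (Ioi h).indicator (fun y => J (y - x)) y :=
          (integral_indicator measurableSet_Ioi).symm
      _ = ∫ t, (Ioi (h - x)).indicator J t := by
          rw [← MeasureTheory.integral_add_right_eq_self
            (fun y => (Ioi h).indicator (fun y => J (y - x)) y) x]
          congr 1
          ext t
          simp only [indicator_apply, mem_Ioi, add_sub_cancel_right,
            ← sub_lt_iff_lt_add]
      _ = F (h - x) := integral_indicator measurableSet_Ioi
  -- F is integrable on bounded intervals
  have hFmeas : Measurable F := hFanti.measurable
  have hFii : ∀ a b : ℝ, IntervalIntegrable F volume a b := by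
    intro a b
    rw [intervalIntegrable_iff]
    have hfin : volume (Set.uIoc a b) ≠ ⊤ := by
      rw [uIoc]; exact measure_Ioc_lt_top.ne
    apply Measure.integrableOn_of_bounded (M := 1) hfin
      hFmeas.aestronglyMeasurable
    refine Filter.Eventually.of_forall fun x => ?_
    rw [Real.norm_eq_abs, abs_of_nonneg (hF0 x)]
    exact hF1 x
  have hinvii : ∀ c : ℝ, 0 < c → ∀ a b : ℝ, c ≤ a → a ≤ b →
      IntervalIntegrable (fun x : ℝ => x⁻¹) volume a b := by
    intro c hc a b ha hab
    apply ContinuousOn.intervalIntegrable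
    apply ContinuousOn.inv₀ continuousOn_id
    intro x hx
    rw [uIcc_of_le hab] at hx
    have hcx : c ≤ x := ha.trans hx.1
    exact (hc.trans_le hcx).ne'
  -- choose constants
  refine ⟨ς₁ / 2, by positivity, ς₂ + M + ς₂ * |Real.log M| + 1,
    by nlinarith [mul_nonneg hς₂.le (abs_nonneg (Real.log M))],
    M ^ 2 + M + Real.exp 1 + 2, by nlinarith [Real.exp_pos 1, sq_nonneg M], ?_⟩
  intro h hh
  have hMh : M < h := by nlinarith [Real.exp_pos 1, sq_nonneg M]
  have h0 : (0:ℝ) < h := hM.trans hMh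
  have hL1 : 1 ≤ Real.log h := by
    rw [Real.le_log_iff_exp_le h0]
    nlinarith [sq_nonneg M]
  have hL2M : 2 * Real.log M ≤ Real.log h := by
    have : Real.log (M ^ 2) ≤ Real.log h := by
      apply Real.log_le_log (by positivity)
      nlinarith [Real.exp_pos 1]
    rwa [Real.log_pow, Nat.cast_ofNat] at this
  -- rewrite the double integral
  have hrw : (∫ x in Ioc (0:ℝ) h, ∫ y in Ioi h, J (x - y))
      = (∫ x in (M:ℝ)..h, F x) + ∫ x in (0:ℝ)..M, F x := by
    calc (∫ x in Ioc (0:ℝ) h, ∫ y in Ioi h, J (x - y))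
        = ∫ x in Ioc (0:ℝ) h, F (h - x) := by
          apply setIntegral_congr_fun measurableSet_Ioc
          intro x _
          exact hinner h x
      _ = ∫ x in (0:ℝ)..h, F (h - x) := (intervalIntegral.integral_of_le h0.le).symm
      _ = ∫ x in (h - h)..(h - 0), F x := intervalIntegral.integral_comp_sub_left F h
      _ = ∫ x in (0:ℝ)..h, F x := by norm_num
      _ = (∫ x in (M:ℝ)..h, F x) + ∫ x in (0:ℝ)..M, F x := by
          rw [add_comm]
          exact (intervalIntegral.integral_add_adjacent_intervals (hFii 0 M) (hFii M h)).symm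
  rw [hrw]
  have hI0M0 : 0 ≤ ∫ x in (0:ℝ)..M, F x :=
    intervalIntegral.integral_nonneg hM.le fun x _ => hF0 x
  have hI0M1 : (∫ x in (0:ℝ)..M, F x) ≤ M := by
    have := intervalIntegral.integral_mono_on hM.le (hFii 0 M)
      (intervalIntegrable_const (c := (1:ℝ))) (fun x _ => hF1 x)
    simpa using this
  have hlogdiv : Real.log (h / M) = Real.log h - Real.log M :=
    Real.log_div h0.ne' hM.ne'
  constructor
  · -- lower bound
    have hlow : ς₁ * (Real.log h - Real.log M) ≤ ∫ x in (M:ℝ)..h, F x := by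
      have hmono := intervalIntegral.integral_mono_on hMh.le
        (((hinvii M hM M h le_rfl hMh.le)).const_mul ς₁) (hFii M h)
        (fun x hx => by
          have := hFlower x hx.1
          rwa [div_eq_mul_inv] at this)
      rwa [intervalIntegral.integral_const_mul, integral_inv_of_pos hM h0,
        hlogdiv] at hmono
    have key : ς₁ / 2 * Real.log h ≤ ς₁ * (Real.log h - Real.log M) := by
      nlinarith [mul_nonneg hς₁.le (sub_nonneg.2 hL2M)]
    exact (key.trans hlow).trans (le_add_of_nonneg_right hI0M0)
  · -- upper bound
    have hup : (∫ x in (M:ℝ)..h, F x) ≤ ς₂ * (Real.log h - Real.log M) := by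
      have hmono := intervalIntegral.integral_mono_on hMh.le (hFii M h)
        (((hinvii M hM M h le_rfl hMh.le)).const_mul ς₂)
        (fun x hx => by
          have := hFupper x hx.1
          rwa [div_eq_mul_inv] at this)
      rwa [intervalIntegral.integral_const_mul, integral_inv_of_pos hM h0,
        hlogdiv] at hmono
    have habs : -Real.log M ≤ |Real.log M| := neg_le_abs _
    have habs0 : (0:ℝ) ≤ |Real.log M| := abs_nonneg _
    have key : ς₂ * (Real.log h - Real.log M) + M
        ≤ (ς₂ + M + ς₂ * |Real.log M| + 1) * Real.log h := by
      nlinarith [mul_le_mul_of_nonneg_left habs hς₂.le,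
        mul_nonneg (mul_nonneg hς₂.le habs0) (sub_nonneg.2 hL1),
        mul_nonneg hM.le (sub_nonneg.2 hL1)]
    exact (add_le_add hup hI0M1).trans key
end

section
/- Let J satisfy condition (J). For any l ≥ 0 and ε > 0, there exists k₀ > l, depending only on l, ε and J, such that for all k₁ > k₀ and k₂ with k₂ − k₁ > 2k₀, defining ψ(x) = min{1, (k₂ − x)/k₁}, one has ∫_l^{k₂} J(x − y) ψ(y) dy ≥ (1 − ε) ψ(x) for all x ∈ [k₀, k₂]. -/
open Set MeasureTheory

private lemma key_min (a u e : ℝ) (he : 0 < e) (he1 : e ≤ 1) (hu0 : 0 ≤ u)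
    (hue : u ≤ e / 2) (hua : u ≤ a) :
    2 * min 1 a * (1 - e / 2) ≤ min 1 (a + u) + min 1 (a - u) := by
  rcases le_or_gt (a + u) 1 with h | h
  · rw [min_eq_right h, min_eq_right (by linarith), min_eq_right (by linarith)]
    nlinarith
  · have h1 : min 1 a ≤ min 1 (a + u) := min_le_min le_rfl (by linarith)
    have h2 : min 1 a - u ≤ min 1 (a - u) := by
      rw [← min_sub_sub_right]
      exact min_le_min (by linarith) le_rfl
    have h3 : 1 - u ≤ min 1 a := le_min (by linarith) (by linarith)
    have h4 : min 1 a ≤ 1 := min_le_left _ _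
    nlinarith

private lemma final_combine (p T I e eps : ℝ) (hp : 0 ≤ p) (he0 : 0 < e) (he1 : e ≤ 1)
    (hee : e ≤ eps) (hI : 1 - e / 2 ≤ 2 * I) (hT : 2 * p * (1 - e / 2) * I ≤ T) :
    (1 - eps) * p ≤ T := by
  have hA : 0 ≤ p * (1 - e / 2) := mul_nonneg hp (by linarith)
  have h1 : p * (1 - e / 2) * (1 - e / 2) ≤ p * (1 - e / 2) * (2 * I) :=
    mul_le_mul_of_nonneg_left hI hA
  have h2 : (1 - eps) ≤ (1 - e / 2) ^ 2 := by nlinarith [sq_nonneg e]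
  have h3 : (1 - eps) * p ≤ (1 - e / 2) ^ 2 * p := mul_le_mul_of_nonneg_right h2 hp
  nlinarith [h1, h3, hT]

private lemma key_min2 (a u e : ℝ) (he0 : 0 ≤ e) (hu : u ≤ 1 / 2) (ha : 0 ≤ a)
    (hau : a ≤ u) :
    2 * min 1 a * (1 - e / 2) ≤ min 1 (a + u) := by
  have h1 : min 1 a = a := min_eq_right (by linarith)
  have h2 : 2 * a ≤ min 1 (a + u) := le_min (by linarith) (by linarith)
  nlinarith

set_option maxHeartbeats 800000 in
theorem kernel_psi_lower_bound
    (J : ℝ → ℝ)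
    (hJc : Continuous J) (hJbdd : ∃ C, ∀ x, J x ≤ C)
    (hJpos : ∀ x, 0 ≤ J x) (hJeven : ∀ x, J (-x) = J x)
    (hJ0 : 0 < J 0) (hJint : ∫ x, J x = 1) :
    ∀ l ≥ (0:ℝ), ∀ ε > (0:ℝ), ∃ k₀ > l, ∀ k₁ k₂ : ℝ, k₀ < k₁ → 2 * k₀ < k₂ - k₁ →
      ∀ x ∈ Icc k₀ k₂,
        (1 - ε) * min 1 ((k₂ - x) / k₁) ≤
          ∫ y in Ioc l k₂, J (x - y) * min 1 ((k₂ - y) / k₁) := by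
  intro l hl ε hε
  set ε' : ℝ := min ε 1 with hε'def
  have hε'0 : 0 < ε' := lt_min hε one_pos
  have hε'1 : ε' ≤ 1 := min_le_right _ _
  have hε'ε : ε' ≤ ε := min_le_left _ _
  have hJi : Integrable J := by
    by_contra h
    rw [integral_undef h] at hJint
    norm_num at hJint
  obtain ⟨R, hR0, hRint⟩ : ∃ R : ℝ, 0 < R ∧ 1 - ε' / 2 < ∫ t in (-R)..R, J t := by
    have h1 : Filter.Tendsto (fun R : ℝ => ∫ t in (-R)..R, J t) Filter.atTop (nhds 1) := by
      have := MeasureTheory.intervalIntegral_tendsto_integral hJi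
        Filter.tendsto_neg_atTop_atBot Filter.tendsto_id
      rwa [hJint] at this
    have h2 : ∀ᶠ R : ℝ in Filter.atTop, 1 - ε' / 2 < ∫ t in (-R)..R, J t :=
      h1.eventually (eventually_gt_nhds (by linarith))
    exact ((Filter.eventually_gt_atTop 0).and h2).exists
  set k₀ : ℝ := max (l + R) (2 * R / ε') with hk₀def
  have hk₀R : l + R ≤ k₀ := le_max_left _ _
  have hk₀e : 2 * R / ε' ≤ k₀ := le_max_right _ _
  have hk₀l : l < k₀ := by linarith
  have hk₀0 : 0 < k₀ := by linarith
  refine ⟨k₀, hk₀l, ?_⟩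
  intro k₁ k₂ hk₁ hk₂ x hx
  obtain ⟨hxk₀, hxk₂⟩ := hx
  have hk₁0 : 0 < k₁ := lt_trans hk₀0 hk₁
  set ψ : ℝ → ℝ := fun y => min 1 ((k₂ - y) / k₁) with hψdef
  set f : ℝ → ℝ := fun y => J (x - y) * ψ y with hfdef
  have hψc : Continuous ψ :=
    continuous_const.min ((continuous_const.sub continuous_id).div_const k₁)
  have hfc : Continuous f := (hJc.comp (continuous_const.sub continuous_id)).mul hψc
  have hψnn : ∀ y, y ≤ k₂ → 0 ≤ ψ y := fun y hy =>
    le_min zero_le_one (div_nonneg (by linarith) hk₁0.le)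
  have hψx0 : 0 ≤ ψ x := hψnn x hxk₂
  -- the window
  set m : ℝ := min k₂ (x + R) with hmdef
  have hxm : x ≤ m := le_min hxk₂ (by linarith)
  have hmk₂ : m ≤ k₂ := min_le_left _ _
  have hmxR : m ≤ x + R := min_le_right _ _
  have hxRl : l ≤ x - R := by linarith
  have hxRm : x - R ≤ m := by linarith
  -- monotonicity of the integral
  have hmono : (∫ y in Ioc (x - R) m, f y) ≤ ∫ y in Ioc l k₂, f y := by
    refine setIntegral_mono_set (hfc.integrableOn_Icc.mono_set Ioc_subset_Icc_self) ?_
      (HasSubset.Subset.eventuallyLE (Ioc_subset_Ioc hxRl hmk₂))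
    refine (ae_restrict_iff' measurableSet_Ioc).2 (Filter.Eventually.of_forall ?_)
    intro y hy
    exact mul_nonneg (hJpos _) (hψnn y hy.2)
  have hIoc : (∫ y in Ioc (x - R) m, f y) = ∫ y in (x - R)..m, f y :=
    (intervalIntegral.integral_of_le hxRm).symm
  have hsplit : (∫ y in (x - R)..m, f y) = (∫ y in (x - R)..x, f y) + ∫ y in x..m, f y :=
    (intervalIntegral.integral_add_adjacent_intervals (hfc.intervalIntegrable _ _)
      (hfc.intervalIntegrable _ _)).symm
  -- substitutions
  have hfsub : ∀ t : ℝ, f (x - t) = J t * ψ (x - t) := by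
    intro t; simp only [hfdef, sub_sub_cancel]
  have hfadd : ∀ t : ℝ, f (x + t) = J t * ψ (x + t) := by
    intro t
    simp only [hfdef]
    rw [show x - (x + t) = -t by ring, hJeven]
  have hsub1 : (∫ y in (x - R)..x, f y) = ∫ t in (0:ℝ)..R, J t * ψ (x - t) := by
    have h := intervalIntegral.integral_comp_sub_left (a := 0) (b := R) f x
    simp only [sub_zero] at h
    rw [← h]
    exact intervalIntegral.integral_congr fun t _ => hfsub t
  have hsub2 : (∫ y in x..m, f y) = ∫ t in (0:ℝ)..(m - x), J t * ψ (x + t) := by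
    have h := intervalIntegral.integral_comp_add_left (a := 0) (b := m - x) f x
    rw [add_zero, show x + (m - x) = m by ring] at h
    rw [← h]
    exact intervalIntegral.integral_congr fun t _ => hfadd t
  set s : ℝ := m - x with hsdef
  have hs_min : s = min (k₂ - x) R := by
    rw [hsdef, hmdef, ← min_sub_sub_right, show x + R - x = R by ring]
  have hs0 : 0 ≤ s := by linarith
  have hsR : s ≤ R := by simp only [hsdef]; linarith
  have hsk : s ≤ k₂ - x := by simp only [hsdef]; linarith
  -- split first integral at s
  have hsplit2 : (∫ t in (0:ℝ)..R, J t * ψ (x - t)) =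
      (∫ t in (0:ℝ)..s, J t * ψ (x - t)) + ∫ t in s..R, J t * ψ (x - t) :=
    (intervalIntegral.integral_add_adjacent_intervals
      (((hJc.mul (hψc.comp (continuous_const.sub continuous_id))).intervalIntegrable _ _))
      (((hJc.mul (hψc.comp (continuous_const.sub continuous_id))).intervalIntegrable _ _))).symm
  -- smallness of R / k₁
  have hRk₁ : R / k₁ ≤ ε' / 2 := by
    rw [div_le_iff₀ hk₁0]
    rw [div_le_iff₀ hε'0] at hk₀e
    have h := mul_le_mul_of_nonneg_left hk₁.le hε'0.le
    linarith only [h, hk₀e]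
  -- pointwise bound on [0, s]
  have hA : ∀ t ∈ Icc (0:ℝ) s,
      2 * ψ x * (1 - ε' / 2) * J t ≤ J t * ψ (x - t) + J t * ψ (x + t) := by
    intro t ht
    obtain ⟨ht0, hts⟩ := ht
    have hkey : 2 * ψ x * (1 - ε' / 2) ≤ ψ (x - t) + ψ (x + t) := by
      have e1 : (k₂ - (x - t)) / k₁ = (k₂ - x) / k₁ + t / k₁ := by ring
      have e2 : (k₂ - (x + t)) / k₁ = (k₂ - x) / k₁ - t / k₁ := by ring
      simp only [hψdef]
      rw [e1, e2]
      refine key_min _ _ _ hε'0 hε'1 (by positivity) ?_ ?_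
      · calc t / k₁ ≤ R / k₁ := by gcongr; linarith
          _ ≤ ε' / 2 := hRk₁
      · gcongr
        linarith
    have h := mul_le_mul_of_nonneg_left hkey (hJpos t)
    linarith only [h]
  have hI1 : (∫ t in (0:ℝ)..s, 2 * ψ x * (1 - ε' / 2) * J t) ≤
      ∫ t in (0:ℝ)..s, (J t * ψ (x - t) + J t * ψ (x + t)) := by
    refine intervalIntegral.integral_mono_on hs0 ?_ ?_ hA
    · exact (continuous_const.mul hJc).intervalIntegrable _ _
    · exact ((hJc.mul (hψc.comp (continuous_const.sub continuous_id))).add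
        (hJc.mul (hψc.comp (continuous_const.add continuous_id)))).intervalIntegrable _ _
  have hI1' : (∫ t in (0:ℝ)..s, (J t * ψ (x - t) + J t * ψ (x + t))) =
      (∫ t in (0:ℝ)..s, J t * ψ (x - t)) + ∫ t in (0:ℝ)..s, J t * ψ (x + t) :=
    intervalIntegral.integral_add
      ((hJc.mul (hψc.comp (continuous_const.sub continuous_id))).intervalIntegrable _ _)
      ((hJc.mul (hψc.comp (continuous_const.add continuous_id))).intervalIntegrable _ _)
  -- pointwise bound on [s, R]
  have hI2 : (∫ t in s..R, 2 * ψ x * (1 - ε' / 2) * J t) ≤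
      ∫ t in s..R, J t * ψ (x - t) := by
    rcases eq_or_lt_of_le hsR with h | h
    · rw [h]
      simp
    · refine intervalIntegral.integral_mono_on hsR
        ((continuous_const.mul hJc).intervalIntegrable _ _)
        ((hJc.mul (hψc.comp (continuous_const.sub continuous_id))).intervalIntegrable _ _) ?_
      intro t ht
      obtain ⟨hts, htR⟩ := ht
      have hk₂xt : k₂ - x ≤ t := by
        rcases le_total (k₂ - x) R with h' | h'
        · have hh : s = k₂ - x := by rw [hs_min, min_eq_left h']
          linarith
        · exfalso
          have hh : s = R := by rw [hs_min, min_eq_right h']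
          linarith
      have hkey : 2 * ψ x * (1 - ε' / 2) ≤ ψ (x - t) := by
        have e1 : (k₂ - (x - t)) / k₁ = (k₂ - x) / k₁ + t / k₁ := by ring
        simp only [hψdef]
        rw [e1]
        refine key_min2 _ _ _ hε'0.le ?_ (div_nonneg (by linarith) hk₁0.le) ?_
        · calc t / k₁ ≤ R / k₁ := by gcongr
            _ ≤ ε' / 2 := hRk₁
            _ ≤ 1 / 2 := by linarith
        · gcongr
      have h2 := mul_le_mul_of_nonneg_left hkey (hJpos t)
      linarith only [h2]
  -- constants out
  have hc1 : (∫ t in (0:ℝ)..s, 2 * ψ x * (1 - ε' / 2) * J t) =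
      2 * ψ x * (1 - ε' / 2) * ∫ t in (0:ℝ)..s, J t :=
    intervalIntegral.integral_const_mul _ _
  have hc2 : (∫ t in s..R, 2 * ψ x * (1 - ε' / 2) * J t) =
      2 * ψ x * (1 - ε' / 2) * ∫ t in s..R, J t :=
    intervalIntegral.integral_const_mul _ _
  have hJadd : (∫ t in (0:ℝ)..s, J t) + ∫ t in s..R, J t = ∫ t in (0:ℝ)..R, J t :=
    intervalIntegral.integral_add_adjacent_intervals (hJc.intervalIntegrable _ _)
      (hJc.intervalIntegrable _ _)
  -- symmetric integral
  have hsym : (∫ t in (-R)..R, J t) = 2 * ∫ t in (0:ℝ)..R, J t := by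
    have h1 : (∫ t in (-R)..(0:ℝ), J t) + ∫ t in (0:ℝ)..R, J t = ∫ t in (-R)..R, J t :=
      intervalIntegral.integral_add_adjacent_intervals (hJc.intervalIntegrable _ _)
        (hJc.intervalIntegrable _ _)
    have h2 : (∫ t in (0:ℝ)..R, J t) = ∫ t in (-R)..(0:ℝ), J t := by
      have h3 := intervalIntegral.integral_comp_neg (a := 0) (b := R) J
      rw [neg_zero] at h3
      rw [← h3]
      exact intervalIntegral.integral_congr fun t _ => (hJeven t).symm
    linarith
  have hJhalf : 1 - ε' / 2 < 2 * ∫ t in (0:ℝ)..R, J t := by rw [← hsym]; exact hRint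
  -- assemble
  have hchain : 2 * ψ x * (1 - ε' / 2) * (∫ t in (0:ℝ)..R, J t) ≤ ∫ y in Ioc l k₂, f y := by
    calc 2 * ψ x * (1 - ε' / 2) * (∫ t in (0:ℝ)..R, J t)
        = (∫ t in (0:ℝ)..s, 2 * ψ x * (1 - ε' / 2) * J t)
          + ∫ t in s..R, 2 * ψ x * (1 - ε' / 2) * J t := by
          rw [hc1, hc2, ← mul_add, hJadd]
      _ ≤ ((∫ t in (0:ℝ)..s, J t * ψ (x - t)) + ∫ t in (0:ℝ)..s, J t * ψ (x + t))
          + ∫ t in s..R, J t * ψ (x - t) := by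
          rw [← hI1']
          exact add_le_add hI1 hI2
      _ = (∫ y in (x - R)..x, f y) + ∫ y in x..m, f y := by
          rw [hsub1, hsub2, hsplit2]
          ring
      _ = ∫ y in (x - R)..m, f y := hsplit.symm
      _ = ∫ y in Ioc (x - R) m, f y := hIoc.symm
      _ ≤ ∫ y in Ioc l k₂, f y := hmono
  exact final_combine (ψ x) _ _ ε' ε hψx0 hε'0 hε'1 hε'ε hJhalf.le hchain
end

section
/- Let f be a Fisher-KPP nonlinearity with positive zero u*, d > 0, and let (‖J_n‖₁)_{n} be a nondecreasing sequence in (0, 1] converging to 1. Suppose for each n the function u ↦ d(‖J_n‖₁ − 1)u + f(u) has a unique positive zero u*_n. Then u*_n ≤ u*_{n+1} ≤ u* for all n and u*_n → u* as n → ∞. -/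
open Set Filter

theorem perturbed_roots_converge
    (f : ℝ → ℝ) (ustar : ℝ) (hustar : 0 < ustar)
    (hf : ContDiff ℝ 1 f)
    (hf0 : f 0 = 0) (hf'0 : 0 < deriv f 0)
    (hfu : f ustar = 0) (hf'u : deriv f ustar < 0)
    (hmono : StrictAntiOn (fun u => f u / u) (Ioi (0:ℝ)))
    (d : ℝ) (hd : 0 < d)
    (a : ℕ → ℝ) (ha : ∀ n, 0 < a n ∧ a n ≤ 1)
    (hamono : Monotone a) (halim : Tendsto a atTop (nhds 1))
    (un : ℕ → ℝ)
    (hun : ∀ n, 0 < un n ∧ d * (a n - 1) * un n + f (un n) = 0 ∧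
      ∀ v : ℝ, 0 < v → d * (a n - 1) * v + f v = 0 → v = un n) :
    (∀ n, un n ≤ un (n + 1) ∧ un n ≤ ustar) ∧
      Tendsto un atTop (nhds ustar) := by
  have hgstar : f ustar / ustar = 0 := by rw [hfu]; simp
  have hpos : ∀ n, 0 < un n := fun n => (hun n).1
  have hval : ∀ n, f (un n) / un n = d * (1 - a n) := by
    intro n
    have h := (hun n).2.1
    have hne : un n ≠ 0 := (hpos n).ne'
    field_simp
    linarith [h]
  have hnn : ∀ n, 0 ≤ d * (1 - a n) := fun n =>
    mul_nonneg hd.le (by linarith [(ha n).2])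
  have hle_star : ∀ n, un n ≤ ustar := by
    intro n
    by_contra h
    push_neg at h
    have := hmono (mem_Ioi.mpr hustar) (mem_Ioi.mpr (hpos n)) h
    simp only at this
    rw [hgstar, hval n] at this
    exact absurd this (not_lt.mpr (hnn n))
  have hmono_un : ∀ n, un n ≤ un (n + 1) := by
    intro n
    by_contra h
    push_neg at h
    have h2 := hmono (mem_Ioi.mpr (hpos (n+1))) (mem_Ioi.mpr (hpos n)) h
    simp only at h2
    rw [hval n, hval (n+1)] at h2
    have : a n ≤ a (n+1) := hamono (Nat.le_succ n)
    nlinarith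
  refine ⟨fun n => ⟨hmono_un n, hle_star n⟩, ?_⟩
  have hmon : Monotone un := monotone_nat_of_le_succ hmono_un
  have hbdd : BddAbove (range un) := ⟨ustar, by rintro x ⟨n, rfl⟩; exact hle_star n⟩
  set L := ⨆ n, un n with hL
  have htend : Tendsto un atTop (nhds L) := tendsto_atTop_ciSup hmon hbdd
  have hLpos : 0 < L := lt_of_lt_of_le (hpos 0) (le_ciSup hbdd 0)
  have hLle : L ≤ ustar := ciSup_le hle_star
  -- pass to the limit in the equation
  have hfl : Tendsto (fun n => d * (a n - 1) * un n + f (un n)) atTop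
      (nhds (d * (1 - 1) * L + f L)) := by
    apply Tendsto.add
    · exact (((tendsto_const_nhds).mul ((halim.sub tendsto_const_nhds))).mul htend).congr
        (by intro n; ring)
    · exact (hf.continuous.tendsto L).comp htend
  have heq : d * (1 - 1) * L + f L = 0 := by
    apply tendsto_nhds_unique hfl
    simp only [(hun _).2.1]
    exact tendsto_const_nhds
  have hfL : f L = 0 := by linarith [heq]
  have : L = ustar := by
    by_contra hne
    have hlt : L < ustar := lt_of_le_of_ne hLle hne
    have := hmono (mem_Ioi.mpr hLpos) (mem_Ioi.mpr hustar) hlt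
    simp only at this
    rw [hgstar, hfL] at this
    simp at this
  rwa [this] at htend
end

section
/- Suppose h : [T, ∞) → (e, ∞) is C¹, nondecreasing, and there is a constant K > 0 with h'(t) ≤ K·ln(h(t)) for all t ≥ T. Then there exists C > 0 such that h(t) ≤ C t ln t for all large t. -/
open Set Filter

theorem ode_comparison_critical
    (h : ℝ → ℝ) (T K : ℝ) (hK : 0 < K)
    (hgt : ∀ t ∈ Ici T, Real.exp 1 < h t)
    (hC1 : ∀ t ∈ Ici T, HasDerivAt h (deriv h t) t)
    (hmono : MonotoneOn h (Ici T))
    (hineq : ∀ t ∈ Ici T, deriv h t ≤ K * Real.log (h t)) :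
    ∃ C > 0, ∀ᶠ t in atTop, h t ≤ C * t * Real.log t := by
  set F : ℝ → ℝ := fun t => h t / Real.log (h t) with hFdef
  have hL : ∀ t ∈ Ici T, 1 < Real.log (h t) := by
    intro t ht
    calc 1 = Real.log (Real.exp 1) := (Real.log_exp 1).symm
    _ < Real.log (h t) := Real.log_lt_log (Real.exp_pos 1) (hgt t ht)
  have hpos : ∀ t ∈ Ici T, 0 < h t := fun t ht => (Real.exp_pos 1).trans (hgt t ht)
  have hFd : ∀ t ∈ Ici T,
      HasDerivAt F (deriv h t * (Real.log (h t) - 1) / (Real.log (h t))^2) t := by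
    intro t ht
    have h0 : h t ≠ 0 := (hpos t ht).ne'
    have hL0 : Real.log (h t) ≠ 0 := by have := hL t ht; linarith
    have hd := (hC1 t ht).div ((hC1 t ht).log h0) hL0
    refine hd.congr_deriv ?_
    have e : h t * (deriv h t / h t) = deriv h t := by field_simp
    rw [e]
    ring
  have hbound : ∀ t ∈ Ici T, deriv h t * (Real.log (h t) - 1) / (Real.log (h t))^2 ≤ K := by
    intro t ht
    have hL1 := hL t ht
    have h1 := hineq t ht
    set L := Real.log (h t)
    have hL2 : (0:ℝ) < L^2 := by positivity
    rw [div_le_iff₀ hL2]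
    nlinarith [mul_le_mul_of_nonneg_right h1 (by linarith : (0:ℝ) ≤ L - 1)]
  -- G = K*t - F is monotone on Ici T
  set G : ℝ → ℝ := fun t => K * t - F t with hGdef
  have hGd : ∀ t ∈ Ici T,
      HasDerivAt G (K - deriv h t * (Real.log (h t) - 1) / (Real.log (h t))^2) t := by
    intro t ht
    exact ((hasDerivAt_id t).const_mul K).congr_deriv (mul_one K) |>.sub (hFd t ht)
  have hGmono : MonotoneOn G (Ici T) := by
    apply monotoneOn_of_deriv_nonneg (convex_Ici T)
    · intro t ht
      exact ((hGd t ht).continuousAt).continuousWithinAt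
    · intro t ht
      rw [interior_Ici] at ht
      exact ((hGd t (le_of_lt (show T < t from ht))).differentiableAt).differentiableWithinAt
    · intro t ht
      rw [interior_Ici] at ht
      have ht' : t ∈ Ici T := le_of_lt (show T < t from ht)
      rw [(hGd t ht').deriv]
      have := hbound t ht'
      linarith
  set A : ℝ := max (F T - K * T) 0 with hAdef
  have hA0 : 0 ≤ A := le_max_right _ _
  have hFle : ∀ t ∈ Ici T, F t ≤ K * t + A := by
    intro t ht
    have := hGmono (self_mem_Ici) ht ht
    have h2 : F T - K * T ≤ A := le_max_left _ _
    simp only [hGdef] at this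
    linarith
  -- exp(L/2) ≤ F t
  have hexpF : ∀ t ∈ Ici T, Real.exp (Real.log (h t) / 2) ≤ F t := by
    intro t ht
    set L := Real.log (h t) with hLdef
    have hL1 := hL t ht
    have hLexp : Real.exp L = h t := Real.exp_log (hpos t ht)
    have key : L ≤ Real.exp (L / 2) := by
      have h4 := Real.add_one_le_exp (L / 4)
      have : Real.exp (L / 2) = Real.exp (L / 4) * Real.exp (L / 4) := by
        rw [← Real.exp_add]; ring_nf
      rw [this]
      nlinarith [sq_nonneg (L/4 - 1),
        mul_le_mul h4 h4 (by linarith : (0:ℝ) ≤ L/4 + 1) (Real.exp_pos _).le]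
    have hhalf : Real.exp (L / 2) * Real.exp (L / 2) = h t := by
      rw [← Real.exp_add, ← hLexp]; ring_nf
    have hLpos : 0 < L := by linarith
    show Real.exp (L / 2) ≤ h t / L
    rw [le_div_iff₀ hLpos]
    calc Real.exp (L / 2) * L ≤ Real.exp (L / 2) * Real.exp (L / 2) :=
          mul_le_mul_of_nonneg_left key (Real.exp_pos _).le
    _ = h t := hhalf
  refine ⟨4 * (K + A) + 1, by positivity, ?_⟩
  rw [eventually_atTop]
  refine ⟨max T (max (K + A + 1) (Real.exp 1)), fun t ht => ?_⟩
  have htT : t ∈ Ici T := le_trans (le_max_left _ _) ht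
  have htKA : K + A + 1 ≤ t := le_trans (le_trans (le_max_left _ _) (le_max_right _ _)) ht
  have hte : Real.exp 1 ≤ t := le_trans (le_trans (le_max_right _ _) (le_max_right _ _)) ht
  have ht1 : (1:ℝ) ≤ t := le_trans (by nlinarith [Real.add_one_le_exp (1:ℝ)]) hte
  have htpos : (0:ℝ) < t := by linarith
  have hlogt : 1 ≤ Real.log t := by
    calc (1:ℝ) = Real.log (Real.exp 1) := (Real.log_exp 1).symm
    _ ≤ Real.log t := Real.log_le_log (Real.exp_pos 1) hte
  set L := Real.log (h t) with hLdef
  have hL1 : 1 < L := hL t htT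
  have hKtA : 0 < K * t + A := by nlinarith
  -- L ≤ 2 log (K t + A)
  have hLle : L ≤ 2 * Real.log (K * t + A) := by
    have h1 : Real.exp (L / 2) ≤ K * t + A := le_trans (hexpF t htT) (hFle t htT)
    have h2 : L / 2 ≤ Real.log (K * t + A) := by
      rw [← Real.log_exp (L / 2)]
      exact Real.log_le_log (Real.exp_pos _) h1
    linarith
  have hsq : K * t + A ≤ t * t := by nlinarith
  have hlog2 : Real.log (K * t + A) ≤ 2 * Real.log t := by
    calc Real.log (K * t + A) ≤ Real.log (t * t) := Real.log_le_log hKtA hsq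
    _ = Real.log t + Real.log t := Real.log_mul htpos.ne' htpos.ne'
    _ = 2 * Real.log t := by ring
  have hL4 : L ≤ 4 * Real.log t := by linarith
  have hht : h t = F t * L := by
    rw [hFdef]
    field_simp
    exact (mul_div_cancel_right₀ (h t) (by linarith : L ≠ 0)).symm
  have hFt : F t ≤ K * t + A := hFle t htT
  have hFtpos : 0 < F t := lt_of_lt_of_le (Real.exp_pos _) (hexpF t htT)
  calc h t = F t * L := hht
  _ ≤ (K * t + A) * (4 * Real.log t) := by
      apply mul_le_mul hFt hL4 (by linarith) (by positivity)
  _ ≤ ((K + A) * t) * (4 * Real.log t) := by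
      have : K * t + A ≤ (K + A) * t := by nlinarith
      nlinarith [this, hlogt]
  _ ≤ (4 * (K + A) + 1) * t * Real.log t := by nlinarith
end
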